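/- arXiv:1410.7171 — 3 statements merged into one kernel-verified Lean document; each statement's English description precedes it below -/
import Mathlib

section
/- For every u > 0 and every α ∈ [1/2, 1], u − (1 + α·u)·log(1 + u) ≤ −(α − 1/2)·u² / (1 + u/3). -/
open Real Set

private lemma key_deriv (x : ℝ) (hx : 0 ≤ x) :
    HasDerivAt (fun y : ℝ => Real.log (1 + y) - y * (6 + 5*y) / (2 * (3 + y) * (1 + y)))
      (1 / (1 + x) - (36 + 60*x + 28*x^2) / (2 * (3 + x) * (1 + x))^2) x := by
  have h1 : (0:ℝ) < 1 + x := by linarith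
  have h3 : (0:ℝ) < 3 + x := by linarith
  have hD : (2 * (3 + x) * (1 + x)) ≠ 0 := by positivity
  have hl : HasDerivAt (fun y : ℝ => Real.log (1 + y)) (1 / (1 + x)) x := by
    have : HasDerivAt (fun y : ℝ => 1 + y) 1 x := (hasDerivAt_id x).const_add 1
    simpa using this.log h1.ne'
  have hN : HasDerivAt (fun y : ℝ => y * (6 + 5*y)) (6 + 10*x) x := by
    have := ((hasDerivAt_id x).mul (((hasDerivAt_id x).const_mul 5).const_add 6))
    convert this using 1 <;> first | rfl | (simp [id_eq] <;> ring)
  have hDd : HasDerivAt (fun y : ℝ => 2 * (3 + y) * (1 + y)) (8 + 4*x) x := by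
    have := ((((hasDerivAt_id x).const_add 3).const_mul 2).mul ((hasDerivAt_id x).const_add 1))
    convert this using 1 <;> first | rfl | (simp [id_eq] <;> ring)
  have hq : HasDerivAt (fun y : ℝ => y * (6 + 5*y) / (2 * (3 + y) * (1 + y)))
      (((6 + 10*x) * (2 * (3 + x) * (1 + x)) - x * (6 + 5*x) * (8 + 4*x)) /
        (2 * (3 + x) * (1 + x))^2) x := hN.div hDd hD
  have := hl.sub hq
  convert this using 1
  rfl; rfl; rfl
  have hD2 : ((2 * (3 + x) * (1 + x))^2) ≠ 0 := by positivity
  rw [sub_right_inj, div_eq_div_iff hD2 hD2]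
  ring

private lemma key_log (u : ℝ) (hu : 0 ≤ u) :
    u * (6 + 5*u) / (2 * (3 + u) * (1 + u)) ≤ Real.log (1 + u) := by
  set f : ℝ → ℝ := fun y => Real.log (1 + y) - y * (6 + 5*y) / (2 * (3 + y) * (1 + y)) with hf
  have hmono : MonotoneOn f (Ici 0) := by
    apply monotoneOn_of_deriv_nonneg (convex_Ici 0)
    · exact fun x hx => ((key_deriv x hx).continuousAt).continuousWithinAt
    · intro x hx
      rw [interior_Ici] at hx
      exact (key_deriv x (le_of_lt hx)).differentiableAt.differentiableWithinAt
    · intro x hx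
      rw [interior_Ici] at hx
      have hx0 : (0:ℝ) < x := hx
      rw [(key_deriv x hx0.le).deriv]
      have h1 : (0:ℝ) < 1 + x := by linarith
      have hD2 : (0:ℝ) < (2 * (3 + x) * (1 + x))^2 := by positivity
      rw [sub_nonneg, div_le_div_iff₀ hD2 h1]
      nlinarith [pow_pos hx0 3, pow_pos hx0 4, sq_nonneg x, hx0.le]
  have h0 : f 0 = 0 := by simp [hf]
  have := hmono (self_mem_Ici) (mem_Ici.mpr hu) hu
  rw [h0] at this
  simpa [hf, sub_nonneg] using this

theorem stmt_1 (u α : ℝ) (hu : 0 < u) (hα : α ∈ Set.Icc (1/2 : ℝ) 1) :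
    u - (1 + α * u) * Real.log (1 + u) ≤ -(α - 1/2) * u ^ 2 / (1 + u / 3) := by
  obtain ⟨hα1, hα2⟩ := hα
  have h1 : (0:ℝ) < 1 + α * u := by nlinarith
  have key := key_log u hu.le
  have step1 : u - (1 + α * u) * Real.log (1 + u)
      ≤ u - (1 + α * u) * (u * (6 + 5*u) / (2 * (3 + u) * (1 + u))) := by
    have := mul_le_mul_of_nonneg_left key h1.le
    linarith
  refine step1.trans ?_
  have h3 : (0:ℝ) < 3 + u := by linarith
  have h4 : (0:ℝ) < 1 + u := by linarith
  have h5 : (0:ℝ) < 1 + u / 3 := by linarith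
  have e1 : u - (1 + α * u) * (u * (6 + 5*u) / (2 * (3 + u) * (1 + u)))
      = (2*u*(3+u)*(1+u) - (1 + α*u) * (u*(6+5*u))) / (2 * (3 + u) * (1 + u)) := by
    field_simp
  rw [e1, div_le_div_iff₀ (by positivity) h5]
  nlinarith [pow_pos hu 3, mul_nonneg (mul_nonneg (sub_nonneg.mpr hα2) (pow_pos hu 3).le) h3.le, sq_nonneg u]
end

section
/- Let M be a finite multiset of real numbers, let X₁, …, Xₙ be a uniformly random sample of size n drawn from M without replacement, and let Y₁, …, Yₙ be i.i.d. uniform samples from M (with replacement). Then for every convex function f : ℝ → ℝ, E[f(X₁ + ⋯ + Xₙ)] ≤ E[f(Y₁ + ⋯ + Yₙ)]. -/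
private lemma sum_perm_mul {α : Type*} [Fintype α] [DecidableEq α]
    (F : Equiv.Perm α → ℝ) (π : Equiv.Perm α) :
    ∑ σ : Equiv.Perm α, F (σ * π) = ∑ σ : Equiv.Perm α, F σ :=
  Equiv.sum_comp (Equiv.mulRight π) F

private lemma sum_perm_apply_eq {n : ℕ} (x : Fin n → ℝ) (j j' : Fin n) :
    ∑ τ : Equiv.Perm (Fin n), x (τ j) = ∑ τ : Equiv.Perm (Fin n), x (τ j') := by
  calc ∑ τ : Equiv.Perm (Fin n), x (τ j)
      = ∑ τ : Equiv.Perm (Fin n), x ((τ * Equiv.swap j' j) j') := by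
        apply Finset.sum_congr rfl; intro τ _
        simp [Equiv.Perm.mul_apply]
    _ = ∑ τ : Equiv.Perm (Fin n), x (τ j') :=
        sum_perm_mul (fun τ => x (τ j')) (Equiv.swap j' j)

private lemma sum_perm_sum {n : ℕ} (x : Fin n → ℝ) (r : Fin n → Fin n) :
    ∑ τ : Equiv.Perm (Fin n), ∑ i, x (τ (r i))
      = (n.factorial : ℝ) * ∑ i, x i := by
  rw [Finset.sum_comm]
  calc ∑ i : Fin n, ∑ τ : Equiv.Perm (Fin n), x (τ (r i))
      = ∑ i : Fin n, ∑ τ : Equiv.Perm (Fin n), x (τ i) :=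
        Finset.sum_congr rfl fun i _ => sum_perm_apply_eq x (r i) i
    _ = ∑ τ : Equiv.Perm (Fin n), ∑ i : Fin n, x (τ i) := Finset.sum_comm
    _ = ∑ τ : Equiv.Perm (Fin n), ∑ i : Fin n, x i := by
        apply Finset.sum_congr rfl; intro τ _; exact Equiv.sum_comp τ x
    _ = (n.factorial : ℝ) * ∑ i, x i := by
        rw [Finset.sum_const, Finset.card_univ, Fintype.card_perm, Fintype.card_fin,
          nsmul_eq_mul]

private lemma core {N n : ℕ} (hn : n ≤ N) (a : Fin N → ℝ) (f : ℝ → ℝ)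
    (hf : ConvexOn ℝ Set.univ f) (r : Fin n → Fin n) :
    ∑ σ : Equiv.Perm (Fin N), f (∑ i : Fin n, a (σ (Fin.castLE hn i)))
      ≤ ∑ σ : Equiv.Perm (Fin N), f (∑ i : Fin n, a (σ (Fin.castLE hn (r i)))) := by
  have hfac : (0:ℝ) < (n.factorial : ℝ) := Nat.cast_pos.mpr n.factorial_pos
  have key : ∀ τ : Equiv.Perm (Fin n),
      ∑ σ : Equiv.Perm (Fin N), f (∑ i : Fin n, a (σ (Fin.castLE hn (τ (r i)))))
        = ∑ σ : Equiv.Perm (Fin N), f (∑ i : Fin n, a (σ (Fin.castLE hn (r i)))) := by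
    intro τ
    set π := τ.viaFintypeEmbedding (Fin.castLEEmb hn) with hπdef
    have hπ : ∀ j : Fin n, π (Fin.castLE hn j) = Fin.castLE hn (τ j) := fun j =>
      Equiv.Perm.viaFintypeEmbedding_apply_image τ (Fin.castLEEmb hn) j
    calc ∑ σ : Equiv.Perm (Fin N), f (∑ i : Fin n, a (σ (Fin.castLE hn (τ (r i)))))
        = ∑ σ : Equiv.Perm (Fin N), f (∑ i : Fin n, a ((σ * π) (Fin.castLE hn (r i)))) := by
          apply Finset.sum_congr rfl; intro σ _
          congr 1; apply Finset.sum_congr rfl; intro i _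
          rw [Equiv.Perm.mul_apply, hπ]
      _ = _ := sum_perm_mul (fun σ => f (∑ i : Fin n, a (σ (Fin.castLE hn (r i))))) π
  have jensen : ∀ σ : Equiv.Perm (Fin N),
      f (∑ i : Fin n, a (σ (Fin.castLE hn i)))
        ≤ ∑ τ : Equiv.Perm (Fin n), ((n.factorial : ℝ))⁻¹ *
            f (∑ i : Fin n, a (σ (Fin.castLE hn (τ (r i))))) := by
    intro σ
    have havg : ∑ i : Fin n, a (σ (Fin.castLE hn i))
        = ∑ τ : Equiv.Perm (Fin n), ((n.factorial : ℝ))⁻¹ •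
            (∑ i : Fin n, a (σ (Fin.castLE hn (τ (r i))))) := by
      rw [← Finset.smul_sum, sum_perm_sum (fun j => a (σ (Fin.castLE hn j))) r,
        smul_eq_mul, inv_mul_cancel_left₀ (ne_of_gt hfac)]
    rw [havg]
    have := hf.map_sum_le (t := Finset.univ)
      (w := fun _ : Equiv.Perm (Fin n) => ((n.factorial : ℝ))⁻¹)
      (p := fun τ : Equiv.Perm (Fin n) => ∑ i : Fin n, a (σ (Fin.castLE hn (τ (r i)))))
      (fun _ _ => by positivity)
      (by rw [Finset.sum_const, Finset.card_univ, Fintype.card_perm, Fintype.card_fin,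
        nsmul_eq_mul, mul_inv_cancel₀ (ne_of_gt hfac)])
      (fun _ _ => Set.mem_univ _)
    simpa using this
  calc ∑ σ : Equiv.Perm (Fin N), f (∑ i : Fin n, a (σ (Fin.castLE hn i)))
      ≤ ∑ σ : Equiv.Perm (Fin N), ∑ τ : Equiv.Perm (Fin n), ((n.factorial : ℝ))⁻¹ *
          f (∑ i : Fin n, a (σ (Fin.castLE hn (τ (r i))))) :=
        Finset.sum_le_sum fun σ _ => jensen σ
    _ = ∑ τ : Equiv.Perm (Fin n), ((n.factorial : ℝ))⁻¹ *
          (∑ σ : Equiv.Perm (Fin N), f (∑ i : Fin n, a (σ (Fin.castLE hn (τ (r i)))))) := by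
        rw [Finset.sum_comm]; simp [Finset.mul_sum]
    _ = ∑ τ : Equiv.Perm (Fin n), ((n.factorial : ℝ))⁻¹ *
          (∑ σ : Equiv.Perm (Fin N), f (∑ i : Fin n, a (σ (Fin.castLE hn (r i))))) := by
        apply Finset.sum_congr rfl; intro τ _; rw [key τ]
    _ = _ := by
        rw [Finset.sum_const, Finset.card_univ, Fintype.card_perm, Fintype.card_fin,
          nsmul_eq_mul, ← mul_assoc, mul_inv_cancel₀ (ne_of_gt hfac), one_mul]
private lemma exists_perm_comp {k N : ℕ} (u v : Fin k → Fin N)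
    (hu : Function.Injective u) (hv : Function.Injective v) :
    ∃ π : Equiv.Perm (Fin N), ∀ j, π (u j) = v j := by
  classical
  let e : {x // x ∈ Set.range u} ≃ {x // x ∈ Set.range v} :=
    (Equiv.ofInjective u hu).symm.trans (Equiv.ofInjective v hv)
  refine ⟨e.extendSubtype, fun j => ?_⟩
  rw [Equiv.extendSubtype_apply_of_mem e (u j) ⟨j, rfl⟩]
  simp [e]

private lemma exists_factor {N n : ℕ} (hn : n ≤ N) (g : Fin n → Fin N) :
    ∃ (r : Fin n → Fin n) (π : Equiv.Perm (Fin N)),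
      ∀ i, g i = π (Fin.castLE hn (r i)) := by
  classical
  set s : Finset (Fin N) := Finset.image g Finset.univ with hs
  have hk : s.card ≤ n := Finset.card_image_le.trans (by simp)
  let e := s.orderIsoOfFin rfl
  let u : Fin s.card → Fin N := fun j => (e j : Fin N)
  let v : Fin s.card → Fin N := fun j => Fin.castLE (hk.trans hn) j
  have hu : Function.Injective u := fun x y hxy => by
    apply e.injective; exact Subtype.ext hxy
  have hv : Function.Injective v := fun x y hxy => by
    simpa [v, Fin.ext_iff] using hxy
  obtain ⟨π, hπ⟩ := exists_perm_comp v u hv hu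
  have hmem : ∀ i, g i ∈ s := fun i => Finset.mem_image_of_mem g (Finset.mem_univ i)
  refine ⟨fun i => Fin.castLE hk (e.symm ⟨g i, hmem i⟩), π, fun i => ?_⟩
  have : Fin.castLE hn (Fin.castLE hk (e.symm ⟨g i, hmem i⟩)) = v (e.symm ⟨g i, hmem i⟩) := by
    simp [v, Fin.ext_iff]
  rw [this, hπ]
  simp [u]

/-- Hoeffding's reduction theorem: for a finite multiset (enumerated by `a : Fin N → ℝ`),
the expectation of a convex function of the sum of `n` samples drawn uniformly without
replacement (the first `n` values of a uniformly random permutation) is at most the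
expectation for `n` i.i.d. uniform samples (arbitrary functions `g : Fin n → Fin N`). -/
theorem stmt_7 (N n : ℕ) (hn : n ≤ N) (a : Fin N → ℝ) (f : ℝ → ℝ)
    (hf : ConvexOn ℝ Set.univ f) :
    (∑ σ : Equiv.Perm (Fin N), f (∑ i : Fin n, a (σ (Fin.castLE hn i)))) / (Nat.factorial N : ℝ)
      ≤ (∑ g : Fin n → Fin N, f (∑ i : Fin n, a (g i))) / ((N : ℝ) ^ n) := by
  classical
  have hNfac : (0:ℝ) < (N.factorial : ℝ) := Nat.cast_pos.mpr N.factorial_pos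
  have hNpow : (0:ℝ) < (N:ℝ) ^ n := by
    rcases Nat.eq_zero_or_pos N with h | h
    · have hn0 : n = 0 := by omega
      subst hn0; simp
    · positivity
  -- Step 2: for each g, the without-replacement sum is dominated
  have step2 : ∀ g : Fin n → Fin N,
      ∑ σ : Equiv.Perm (Fin N), f (∑ i : Fin n, a (σ (Fin.castLE hn i)))
        ≤ ∑ σ : Equiv.Perm (Fin N), f (∑ i : Fin n, a (σ (g i))) := by
    intro g
    obtain ⟨r, π, hg⟩ := exists_factor hn g
    have : ∑ σ : Equiv.Perm (Fin N), f (∑ i : Fin n, a (σ (g i)))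
        = ∑ σ : Equiv.Perm (Fin N), f (∑ i : Fin n, a (σ (Fin.castLE hn (r i)))) := by
      calc ∑ σ : Equiv.Perm (Fin N), f (∑ i : Fin n, a (σ (g i)))
          = ∑ σ : Equiv.Perm (Fin N), f (∑ i : Fin n, a ((σ * π) (Fin.castLE hn (r i)))) := by
            apply Finset.sum_congr rfl; intro σ _
            congr 1; apply Finset.sum_congr rfl; intro i _
            rw [Equiv.Perm.mul_apply, ← hg]
        _ = _ := sum_perm_mul (fun σ => f (∑ i : Fin n, a (σ (Fin.castLE hn (r i))))) π
    rw [this]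
    exact core hn a f hf r
  -- Step 1: double-counting for the iid side
  have step1 : ∑ σ : Equiv.Perm (Fin N), ∑ g : Fin n → Fin N, f (∑ i : Fin n, a (σ (g i)))
      = (N.factorial : ℝ) * ∑ g : Fin n → Fin N, f (∑ i : Fin n, a (g i)) := by
    have h1 : ∀ σ : Equiv.Perm (Fin N),
        ∑ g : Fin n → Fin N, f (∑ i : Fin n, a (σ (g i)))
          = ∑ g : Fin n → Fin N, f (∑ i : Fin n, a (g i)) := by
      intro σ
      exact Equiv.sum_comp ((Equiv.refl (Fin n)).arrowCongr σ)
        (fun g : Fin n → Fin N => f (∑ i : Fin n, a (g i)))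
    calc ∑ σ : Equiv.Perm (Fin N), ∑ g : Fin n → Fin N, f (∑ i : Fin n, a (σ (g i)))
        = ∑ _σ : Equiv.Perm (Fin N), ∑ g : Fin n → Fin N, f (∑ i : Fin n, a (g i)) :=
          Finset.sum_congr rfl fun σ _ => h1 σ
      _ = _ := by
          rw [Finset.sum_const, Finset.card_univ, Fintype.card_perm, Fintype.card_fin,
            nsmul_eq_mul]
  -- Combine
  rw [div_le_div_iff₀ hNfac hNpow]
  have hmain : ((N:ℝ) ^ n) * ∑ σ : Equiv.Perm (Fin N), f (∑ i : Fin n, a (σ (Fin.castLE hn i)))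
      ≤ (N.factorial : ℝ) * ∑ g : Fin n → Fin N, f (∑ i : Fin n, a (g i)) := by
    rw [← step1]
    calc ((N:ℝ) ^ n) * ∑ σ : Equiv.Perm (Fin N), f (∑ i : Fin n, a (σ (Fin.castLE hn i)))
        = ∑ _g : Fin n → Fin N,
            ∑ σ : Equiv.Perm (Fin N), f (∑ i : Fin n, a (σ (Fin.castLE hn i))) := by
          rw [Finset.sum_const, Finset.card_univ, Fintype.card_fun, Fintype.card_fin,
            Fintype.card_fin, nsmul_eq_mul, Nat.cast_pow]
      _ ≤ ∑ g : Fin n → Fin N, ∑ σ : Equiv.Perm (Fin N), f (∑ i : Fin n, a (σ (g i))) :=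
          Finset.sum_le_sum fun g _ => step2 g
      _ = ∑ σ : Equiv.Perm (Fin N), ∑ g : Fin n → Fin N, f (∑ i : Fin n, a (σ (g i))) :=
          Finset.sum_comm
  nlinarith [hmain]
end

section
/- Let a₁, …, aₙ be nonnegative reals with each aᵢ ≤ γ·A where A = Σᵢ aᵢ > 0. Let σ be a uniformly random permutation of [n], let ε ∈ (0,1) with nε ∈ ℕ, h ≥ 0 with 2^h nε ≤ n, and θ = 2^{−(h+1)/2}ε^{1/2}. Then P(Σ_{t=1}^{2^h nε} a_{σ(t)} < 2^h ε(1−θ)·A) ≤ exp(−ε²/(4γ)). -/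
open MeasureTheory


private lemma exp_neg_le_quad {x : ℝ} (hx : 0 ≤ x) :
    Real.exp (-x) ≤ 1 - x + x ^ 2 / 2 := by
  have key : 1 ≤ Real.exp x * (1 - x + x ^ 2 / 2) := by
    set g : ℝ → ℝ := fun y => Real.exp y * (1 - y + y ^ 2 / 2) with hg
    have hderiv : ∀ y : ℝ, HasDerivAt g (Real.exp y * (y ^ 2 / 2)) y := by
      intro y
      have h1 : HasDerivAt (fun z : ℝ => 1 - z + z ^ 2 / 2) (-1 + 2 * y / 2) y := by
        have := ((hasDerivAt_pow 2 y).div_const 2)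
        have h2 := ((hasDerivAt_const y (1:ℝ)).sub (hasDerivAt_id y)).add this
        exact h2.congr_deriv (by norm_num)
      have := (Real.hasDerivAt_exp y).mul h1
      exact this.congr_deriv (by ring)
    have hmono : MonotoneOn g (Set.Ici (0:ℝ)) := by
      apply monotoneOn_of_deriv_nonneg (convex_Ici 0)
      · exact (Continuous.mul Real.continuous_exp (by continuity)).continuousOn
      · intro y hy
        exact (hderiv y).differentiableAt.differentiableWithinAt
      · intro y hy
        rw [(hderiv y).deriv]
        positivity
    have h0 : g 0 = 1 := by simp [hg]
    have := hmono (Set.self_mem_Ici) (Set.mem_Ici.mpr hx) hx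
    rw [h0] at this
    exact this
  rw [Real.exp_neg]
  rw [inv_le_iff_one_le_mul₀ (Real.exp_pos x)]
  linarith [key]

private noncomputable def permSum (n : ℕ) (w : Fin n → ℝ) (k : ℕ) : ℝ :=
  ∑ σ : Equiv.Perm (Fin n),
    ∏ t ∈ Finset.univ.filter (fun t : Fin n => (t : ℕ) < k), w (σ t)

private lemma permSum_zero (n : ℕ) (w : Fin n → ℝ) :
    permSum n w 0 = (n.factorial : ℝ) := by
  unfold permSum
  have : Finset.univ.filter (fun t : Fin n => (t : ℕ) < 0) = ∅ := by
    simp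
  simp [this, Fintype.card_perm]

private lemma permSum_succ_le (n : ℕ) (w : Fin n → ℝ) (hw : ∀ i, 0 ≤ w i)
    (k : ℕ) (hk : k + 1 ≤ n) :
    (n : ℝ) * permSum n w (k + 1) ≤ (∑ i, w i) * permSum n w k := by
  have hkn : k < n := hk
  set p : Fin n := ⟨k, hkn⟩ with hp
  set Fk : Finset (Fin n) := Finset.univ.filter (fun t : Fin n => (t : ℕ) < k) with hFk
  have hpF : p ∉ Fk := by simp [hFk, hp]
  have hins : Finset.univ.filter (fun t : Fin n => (t : ℕ) < k + 1) = insert p Fk := by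
    ext t
    simp only [Finset.mem_filter, Finset.mem_univ, true_and, Finset.mem_insert, hFk]
    constructor
    · intro ht
      rcases Nat.lt_succ_iff_lt_or_eq.mp ht with h | h
      · exact Or.inr (by simpa using h)
      · exact Or.inl (Fin.ext h)
    · rintro (rfl | ht)
      · exact Nat.lt_succ_self _
      · simpa using Nat.lt_succ_of_lt (by simpa using ht)
  have hP : permSum n w (k + 1) = ∑ σ : Equiv.Perm (Fin n), w (σ p) * ∏ t ∈ Fk, w (σ t) := by
    unfold permSum
    rw [hins]
    exact Finset.sum_congr rfl fun σ _ => Finset.prod_insert hpF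
  set Q : Fin n → ℝ := fun s => ∑ σ : Equiv.Perm (Fin n), w (σ s) * ∏ t ∈ Fk, w (σ t) with hQ
  -- reindexing tool
  have hreidx : ∀ (s : Fin n) (f : Equiv.Perm (Fin n) → ℝ),
      ∑ σ : Equiv.Perm (Fin n), f σ = ∑ σ : Equiv.Perm (Fin n), f (σ * Equiv.swap s p) := by
    intro s f
    exact (Fintype.sum_equiv (Equiv.mulRight (Equiv.swap s p)) _ _ (fun σ => rfl)).symm
  have claim1 : ∀ s : Fin n, permSum n w (k + 1) ≤ Q s := by
    intro s
    by_cases hs : s ∈ Fk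
    · -- s < k
      have hsplit : ∀ σ : Equiv.Perm (Fin n),
          ∏ t ∈ Fk, w (σ t) = w (σ s) * ∏ t ∈ Fk.erase s, w (σ t) :=
        fun σ => (Finset.mul_prod_erase Fk _ hs).symm
      set π : Equiv.Perm (Fin n) → ℝ := fun σ => ∏ t ∈ Fk.erase s, w (σ t) with hπ
      have hπ0 : ∀ σ, 0 ≤ π σ := fun σ => Finset.prod_nonneg fun t _ => hw _
      have hfix : ∀ t ∈ Fk.erase s, Equiv.swap s p t = t := by
        intro t ht
        rcases Finset.mem_erase.mp ht with ⟨hts, htF⟩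
        refine Equiv.swap_apply_of_ne_of_ne hts ?_
        intro htp
        exact hpF (htp ▸ htF)
      have hπswap : ∀ σ : Equiv.Perm (Fin n), π (σ * Equiv.swap s p) = π σ := by
        intro σ
        refine Finset.prod_congr rfl fun t ht => ?_
        simp [Equiv.Perm.mul_apply, hfix t ht]
      have hPs : permSum n w (k + 1) = ∑ σ : Equiv.Perm (Fin n), w (σ p) * (w (σ s) * π σ) := by
        rw [hP]; exact Finset.sum_congr rfl fun σ _ => by rw [hsplit σ]
      have hQs : Q s = ∑ σ : Equiv.Perm (Fin n), w (σ s) * (w (σ s) * π σ) := by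
        rw [hQ]; exact Finset.sum_congr rfl fun σ _ => by rw [hsplit σ]
      have hQs' : Q s = ∑ σ : Equiv.Perm (Fin n), w (σ p) * (w (σ p) * π σ) := by
        rw [hQs, hreidx s (fun σ => w (σ s) * (w (σ s) * π σ))]
        refine Finset.sum_congr rfl fun σ _ => ?_
        have h1 : (σ * Equiv.swap s p) s = σ p := by
          simp [Equiv.Perm.mul_apply]
        rw [h1, hπswap]
      have h2 : 2 * permSum n w (k + 1) ≤ Q s + Q s := by
        rw [hPs]
        nth_rewrite 1 [hQs]
        rw [hQs']
        rw [Finset.mul_sum, ← Finset.sum_add_distrib]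
        refine Finset.sum_le_sum fun σ _ => ?_
        nlinarith [sq_nonneg (w (σ s) - w (σ p)), hπ0 σ, sq_nonneg (w (σ s) + w (σ p))]
      linarith
    · -- s ∉ Fk : equality via swap
      have : permSum n w (k + 1) = Q s := by
        rw [hP, hreidx s (fun σ => w (σ p) * ∏ t ∈ Fk, w (σ t))]
        refine Finset.sum_congr rfl fun σ _ => ?_
        have h1 : (σ * Equiv.swap s p) p = σ s := by
          simp [Equiv.Perm.mul_apply]
        rw [h1]
        congr 1
        refine Finset.prod_congr rfl fun t ht => ?_
        have hts : t ≠ s := fun h => hs (h ▸ ht)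
        have htp : t ≠ p := fun h => hpF (h ▸ ht)
        simp [Equiv.Perm.mul_apply, Equiv.swap_apply_of_ne_of_ne hts htp]
      exact this.le
  have claim2 : ∑ s : Fin n, Q s = (∑ i, w i) * permSum n w k := by
    rw [hQ]
    rw [Finset.sum_comm]
    unfold permSum
    rw [Finset.mul_sum]
    refine Finset.sum_congr rfl fun σ _ => ?_
    rw [← Finset.sum_mul]
    congr 1
    exact Equiv.sum_comp σ w
  calc (n : ℝ) * permSum n w (k + 1)
      = ∑ _s : Fin n, permSum n w (k + 1) := by
        rw [Finset.sum_const, Finset.card_univ, Fintype.card_fin, nsmul_eq_mul]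
    _ ≤ ∑ s : Fin n, Q s := Finset.sum_le_sum fun s _ => claim1 s
    _ = (∑ i, w i) * permSum n w k := claim2

private lemma permSum_le (n : ℕ) (hn : 0 < n) (w : Fin n → ℝ) (hw : ∀ i, 0 ≤ w i) :
    ∀ k, k ≤ n → permSum n w k ≤ (n.factorial : ℝ) * ((∑ i, w i) / n) ^ k := by
  intro k
  induction k with
  | zero => intro _; simp [permSum_zero]
  | succ k ih =>
    intro hk
    have hkn := le_of_lt (Nat.lt_of_lt_of_le (Nat.lt_succ_self k) hk)
    have hρ : 0 ≤ (∑ i, w i) / n := by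
      apply div_nonneg (Finset.sum_nonneg fun i _ => hw i) (Nat.cast_nonneg n)
    have key := permSum_succ_le n w hw k hk
    have hnpos : (0:ℝ) < n := by exact_mod_cast hn
    have step : permSum n w (k + 1) ≤ ((∑ i, w i) / n) * permSum n w k := by
      rw [div_mul_eq_mul_div, le_div_iff₀ hnpos]
      linarith [key]
    calc permSum n w (k + 1) ≤ ((∑ i, w i) / n) * permSum n w k := step
      _ ≤ ((∑ i, w i) / n) * ((n.factorial : ℝ) * ((∑ i, w i) / n) ^ k) :=
          mul_le_mul_of_nonneg_left (ih hkn) hρ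
      _ = (n.factorial : ℝ) * ((∑ i, w i) / n) ^ (k + 1) := by ring


/-- Lower-tail concentration for a uniformly random prefix of size `2^h · nε` of fixed
nonnegative values `aᵢ ≤ γ·A` summing to `A > 0`:
`P(Σ_{t=1}^{2^h nε} a_{σ(t)} < 2^h ε (1-θ) A) ≤ exp(-ε²/(4γ))`, `θ = 2^{-(h+1)/2} √ε`. -/
theorem stmt_18 (n : ℕ) (a : Fin n → ℝ) (ha : ∀ i, 0 ≤ a i)
    (A : ℝ) (hA : A = ∑ i, a i) (hApos : 0 < A)
    (γ : ℝ) (hγ : 0 < γ) (hbd : ∀ i, a i ≤ γ * A)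
    (ε : ℝ) (hε : ε ∈ Set.Ioo (0:ℝ) 1)
    (nε : ℕ) (hnε : (nε : ℝ) = n * ε)
    (h : ℕ) (hhn : 2 ^ h * nε ≤ n)
    (θ : ℝ) (hθ : θ = (2 : ℝ) ^ (-((h : ℝ) + 1) / 2) * Real.sqrt ε)
    [m0 : MeasurableSpace (Equiv.Perm (Fin n))] (hm0 : m0 = ⊤)
    (μ : Measure (Equiv.Perm (Fin n)))
    (hμ : μ = (PMF.uniformOfFintype (Equiv.Perm (Fin n))).toMeasure) :
    μ {σ | ∑ t ∈ Finset.univ.filter (fun t : Fin n => (t : ℕ) < 2 ^ h * nε), a (σ t)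
            < 2 ^ h * ε * (1 - θ) * A}
      ≤ ENNReal.ofReal (Real.exp (-(ε ^ 2) / (4 * γ))) := by
  classical
  subst hm0
  subst hμ
  obtain ⟨hε0, hε1⟩ := hε
  have hn : 0 < n := by
    rcases Nat.eq_zero_or_pos n with h0 | h0
    · exfalso; subst h0; rw [hA] at hApos; simp at hApos
    · exact h0
  have hnR : (0:ℝ) < n := by exact_mod_cast hn
  -- basic positivity
  have hθpos : 0 < θ := by
    rw [hθ]
    have := Real.rpow_pos_of_pos (by norm_num : (0:ℝ) < 2) (-((h:ℝ)+1)/2)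
    have := Real.sqrt_pos.mpr hε0
    positivity
  set lam : ℝ := θ / (γ * A) with hlam
  have hγA : (0:ℝ) < γ * A := mul_pos hγ hApos
  have hlam0 : 0 ≤ lam := le_of_lt (div_pos hθpos hγA)
  have hlamγA : lam * (γ * A) = θ := div_mul_cancel₀ θ (ne_of_gt hγA)
  have hlamA : lam * A = θ / γ := by
    rw [hlam]; field_simp
  set k : ℕ := 2 ^ h * nε with hk
  have hkr : (k : ℝ) = 2 ^ h * ((n:ℝ) * ε) := by
    rw [hk]; push_cast [hnε]; ring
  set c : ℝ := 2 ^ h * ε * (1 - θ) * A with hc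
  set S : Equiv.Perm (Fin n) → ℝ :=
    fun σ => ∑ t ∈ Finset.univ.filter (fun t : Fin n => (t : ℕ) < k), a (σ t) with hS
  set w : Fin n → ℝ := fun i => Real.exp (-(lam * a i)) with hw
  have hw0 : ∀ i, 0 ≤ w i := fun i => (Real.exp_pos _).le
  -- bound on each w i
  have hwle : ∀ i, w i ≤ 1 - (1 - θ/2) * (lam * a i) := by
    intro i
    have hx : 0 ≤ lam * a i := mul_nonneg hlam0 (ha i)
    have h1 : w i ≤ 1 - lam * a i + (lam * a i)^2/2 := exp_neg_le_quad hx
    have h2 : lam * a i ≤ θ := by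
      calc lam * a i ≤ lam * (γ * A) := mul_le_mul_of_nonneg_left (hbd i) hlam0
        _ = θ := hlamγA
    nlinarith [hx]
  have hsumw : ∑ i, w i ≤ (n:ℝ) - (1 - θ/2) * (lam * A) := by
    calc ∑ i, w i ≤ ∑ i, (1 - (1 - θ/2) * (lam * a i)) :=
          Finset.sum_le_sum fun i _ => hwle i
      _ = (n:ℝ) - (1 - θ/2) * (lam * ∑ i, a i) := by
          rw [Finset.sum_sub_distrib, Finset.sum_const, Finset.card_univ, Fintype.card_fin,
            nsmul_eq_mul, mul_one]
          congr 1
          rw [Finset.mul_sum, Finset.mul_sum]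
      _ = (n:ℝ) - (1 - θ/2) * (lam * A) := by rw [← hA]
  set ρ : ℝ := (∑ i, w i) / n with hρ
  have hρ0 : 0 ≤ ρ := div_nonneg (Finset.sum_nonneg fun i _ => hw0 i) hnR.le
  set u : ℝ := ((1 - θ/2) * (lam * A)) / n with hu
  have hρle : ρ ≤ 1 - u := by
    rw [hρ, hu]
    rw [div_le_iff₀ hnR] at *
    have : (1 - ((1 - θ/2) * (lam * A))/n) * n = n - (1 - θ/2)*(lam*A) := by
      field_simp
    rw [this]
    exact hsumw
  have hρexp : ρ ≤ Real.exp (-u) := by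
    have := Real.add_one_le_exp (-u)
    linarith
  have hpow : ρ ^ k ≤ Real.exp ((k:ℝ) * (-u)) := by
    calc ρ ^ k ≤ (Real.exp (-u)) ^ k := pow_le_pow_left₀ hρ0 hρexp k
      _ = Real.exp ((k:ℝ) * (-u)) := by rw [← Real.exp_nat_mul]
  -- Chernoff
  set E : Set (Equiv.Perm (Fin n)) := {σ | S σ < c} with hE
  set Ef : Finset (Equiv.Perm (Fin n)) := Finset.univ.filter (fun σ => σ ∈ E) with hEf
  have hcard : (Ef.card : ℝ) ≤ (n.factorial : ℝ) * Real.exp (lam * c + (k:ℝ) * (-u)) := by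
    have step1 : (Ef.card : ℝ) ≤ ∑ σ ∈ Ef, Real.exp (lam * (c - S σ)) := by
      rw [Finset.card_eq_sum_ones Ef]
      push_cast
      refine Finset.sum_le_sum fun σ hσ => ?_
      have hσE : S σ < c := by
        have := Finset.mem_filter.mp hσ
        exact this.2
      have : 0 ≤ lam * (c - S σ) := mul_nonneg hlam0 (by linarith)
      calc (1:ℝ) = Real.exp 0 := Real.exp_zero.symm
        _ ≤ Real.exp (lam * (c - S σ)) := Real.exp_le_exp.mpr this
    have step2 : ∑ σ ∈ Ef, Real.exp (lam * (c - S σ))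
        ≤ ∑ σ : Equiv.Perm (Fin n), Real.exp (lam * (c - S σ)) :=
      Finset.sum_le_sum_of_subset_of_nonneg (Finset.filter_subset _ _)
        (fun σ _ _ => (Real.exp_pos _).le)
    have step3 : ∑ σ : Equiv.Perm (Fin n), Real.exp (lam * (c - S σ))
        = Real.exp (lam * c) * permSum n w k := by
      unfold permSum
      rw [Finset.mul_sum]
      refine Finset.sum_congr rfl fun σ _ => ?_
      have e1 : lam * (c - S σ) = lam * c + (- (lam * S σ)) := by ring
      rw [e1, Real.exp_add]
      congr 1
      have e2 : -(lam * S σ) = ∑ t ∈ Finset.univ.filter (fun t : Fin n => (t:ℕ) < k),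
          -(lam * a (σ t)) := by
        rw [hS]
        simp only []
        rw [Finset.mul_sum, ← Finset.sum_neg_distrib]
      rw [e2, Real.exp_sum]
    have step4 : permSum n w k ≤ (n.factorial : ℝ) * ρ ^ k := permSum_le n hn w hw0 k hhn
    calc (Ef.card : ℝ) ≤ ∑ σ ∈ Ef, Real.exp (lam * (c - S σ)) := step1
      _ ≤ ∑ σ : Equiv.Perm (Fin n), Real.exp (lam * (c - S σ)) := step2
      _ = Real.exp (lam * c) * permSum n w k := step3
      _ ≤ Real.exp (lam * c) * ((n.factorial : ℝ) * ρ ^ k) :=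
          mul_le_mul_of_nonneg_left step4 (Real.exp_pos _).le
      _ ≤ Real.exp (lam * c) * ((n.factorial : ℝ) * Real.exp ((k:ℝ) * (-u))) := by
          have h1 : (n.factorial : ℝ) * ρ ^ k ≤ (n.factorial : ℝ) * Real.exp ((k:ℝ) * (-u)) :=
            mul_le_mul_of_nonneg_left hpow (Nat.cast_nonneg _)
          exact mul_le_mul_of_nonneg_left h1 (Real.exp_pos _).le
      _ = (n.factorial : ℝ) * Real.exp (lam * c + (k:ℝ) * (-u)) := by
          rw [Real.exp_add]; ring
  -- exponent identity
  have hpowθ : (2:ℝ)^h * θ^2 = ε/2 := by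
    rw [hθ, mul_pow, Real.sq_sqrt hε0.le]
    have h1 : ((2:ℝ) ^ (-((h:ℝ)+1)/2))^2 = (2:ℝ)^(-((h:ℝ)+1)) := by
      rw [← Real.rpow_natCast ((2:ℝ)^(-((h:ℝ)+1)/2)) 2, ← Real.rpow_mul (by norm_num)]
      norm_num
    rw [h1]
    have h2 : (2:ℝ)^(h:ℕ) = (2:ℝ)^((h:ℝ)) := (Real.rpow_natCast 2 h).symm
    rw [h2, ← mul_assoc, ← Real.rpow_add (by norm_num : (0:ℝ) < 2)]
    have h3 : (h:ℝ) + -((h:ℝ)+1) = -1 := by ring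
    rw [h3, Real.rpow_neg_one]
    ring
  have hexpid : lam * c + (k:ℝ) * (-u) = -(ε^2)/(4*γ) := by
    have h1 : lam * c = 2^h * ε * (1-θ) * (θ/γ) := by
      rw [hc, ← hlamA]; ring
    have h2 : (k:ℝ) * (-u) = -(2^h * ε * (1-θ/2) * (θ/γ)) := by
      rw [hu, hkr, ← hlamA]
      field_simp
    rw [h1, h2]
    have hγ' : γ ≠ 0 := ne_of_gt hγ
    linear_combination (-(ε/(2*γ))) * hpowθ
  have hcard' : (Ef.card : ℝ) ≤ (n.factorial : ℝ) * Real.exp (-(ε^2)/(4*γ)) := by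
    rw [← hexpid]; exact hcard
  -- measure computation
  letI : MeasurableSpace (Equiv.Perm (Fin n)) := ⊤
  haveI : MeasurableSingletonClass (Equiv.Perm (Fin n)) :=
    ⟨fun _ => MeasurableSpace.measurableSet_top⟩
  have hmeas : ((PMF.uniformOfFintype (Equiv.Perm (Fin n))).toMeasure) E
      = (Ef.card : ENNReal) * ((n.factorial : ENNReal))⁻¹ := by
    rw [PMF.toMeasure_apply_fintype]
    have hind : ∀ σ : Equiv.Perm (Fin n),
        E.indicator (⇑(PMF.uniformOfFintype (Equiv.Perm (Fin n)))) σ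
        = if σ ∈ E then ((n.factorial : ENNReal))⁻¹ else 0 := by
      intro σ
      rw [Set.indicator_apply]
      split_ifs with h'
      · rw [PMF.uniformOfFintype_apply]
        congr 1
        have : Fintype.card (Equiv.Perm (Fin n)) = n.factorial := by
          rw [Fintype.card_perm, Fintype.card_fin]
        exact_mod_cast congrArg (Nat.cast : ℕ → ENNReal) this
      · rfl
    rw [Finset.sum_congr rfl (fun σ _ => hind σ)]
    rw [← Finset.sum_filter]
    rw [Finset.sum_const, nsmul_eq_mul]
  have hfac0 : (0:ℝ) < (n.factorial : ℝ) := by exact_mod_cast n.factorial_pos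
  have hENN : (Ef.card : ENNReal) * ((n.factorial : ENNReal))⁻¹
      = ENNReal.ofReal ((Ef.card : ℝ) * ((n.factorial : ℝ))⁻¹) := by
    rw [ENNReal.ofReal_mul (Nat.cast_nonneg _), ENNReal.ofReal_inv_of_pos hfac0,
      ENNReal.ofReal_natCast, ENNReal.ofReal_natCast]
  have hfinal : ((PMF.uniformOfFintype (Equiv.Perm (Fin n))).toMeasure) E
      ≤ ENNReal.ofReal (Real.exp (-(ε ^ 2) / (4 * γ))) := by
    rw [hmeas, hENN]
    apply ENNReal.ofReal_le_ofReal
    have hmul := mul_le_mul_of_nonneg_right hcard' (inv_nonneg.mpr hfac0.le)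
    calc (Ef.card : ℝ) * ((n.factorial : ℝ))⁻¹
        ≤ ((n.factorial : ℝ) * Real.exp (-(ε^2)/(4*γ))) * ((n.factorial : ℝ))⁻¹ := hmul
      _ = Real.exp (-(ε ^ 2) / (4 * γ)) := by field_simp
  exact hfinal
end
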